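/- Let A be a σ-weakly amenable commutative Banach algebra, I a closed ideal of A, E a Banach A-module, and σ ∈ Hom(A) with dense range such that σ(I) ⊆ I. Then every σ-derivation D : I → E vanishes on I⁴ (the span of products of four elements of I). -/

import Mathlib

/-- `σ`-weak amenability of a Banach algebra `B`: every bounded `σ`-derivation
`D : B → B*` into the dual bimodule `B*` (with actions `(b·Λ)(x) = Λ(x b)`,
`(Λ·b)(x) = Λ(b x)`) is `σ`-inner. -/
def SigmaWeaklyAmenable (B : Type u) [NonUnitalNormedRing B] [NormedSpace ℂ B]
    (s : B → B) : Prop :=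
  ∀ D : B →L[ℂ] (B →L[ℂ] ℂ),
    (∀ a b x, D (a * b) x = D a (s b * x) + D b (x * s a)) →
    ∃ Λ : B →L[ℂ] ℂ, ∀ a x, D a x = Λ (x * s a) - Λ (s a * x)

/-- let `A` be a `σ`-weakly amenable commutative Banach algebra,
`I` a closed ideal of `A`, `E` a Banach `A`-module (action `m`), and
`σ ∈ Hom(A)` with dense range and `σ(I) ⊆ I`. Then every `σ`-derivation
`D : I → E` vanishes on `I⁴`. -/
theorem stmt15 {A : Type u} [NonUnitalNormedRing A] [NormedSpace ℂ A]
    [IsScalarTower ℂ A A] [SMulCommClass ℂ A A] [CompleteSpace A]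
    (hcomm : ∀ a b : A, a * b = b * a)
    (σ : A →L[ℂ] A) (hσ : ∀ a b : A, σ (a * b) = σ a * σ b)
    (hdense : DenseRange σ) (hwa : SigmaWeaklyAmenable A σ)
    (I : Submodule ℂ A) (hIc : IsClosed (I : Set A))
    (hI : ∀ a b : A, b ∈ I → a * b ∈ I)
    (hσI : ∀ a ∈ I, σ a ∈ I)
    (E : Type u) [NormedAddCommGroup E] [NormedSpace ℂ E] [CompleteSpace E]
    (m : A →L[ℂ] E →L[ℂ] E) (hm : ∀ a b x, m (a * b) x = m a (m b x))
    (D : I →L[ℂ] E)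
    (hD : ∀ x y : I, D ⟨(x : A) * (y : A), hI (x : A) (y : A) y.2⟩
      = m (σ (y : A)) (D x) + m (σ (x : A)) (D y)) :
    ∀ x : I, (x : A) ∈ Submodule.span ℂ
        {z : A | ∃ a ∈ I, ∃ b ∈ I, ∃ c ∈ I, ∃ d ∈ I, z = a * b * c * d} →
      D x = 0 := by
  classical
  -- a version of the derivation identity with arbitrary membership proof
  have hDmul : ∀ (p q : I) (z : A) (hz : z ∈ I), z = (p : A) * (q : A) →
      D ⟨z, hz⟩ = m (σ (q : A)) (D p) + m (σ (p : A)) (D q) := by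
    intro p q z hz hzeq
    subst hzeq
    exact hD p q
  -- key vanishing lemma
  have key : ∀ (u v w : I) (y : A),
      m (y * (σ (v : A) * σ (u : A))) (D w) = 0 := by
    intro u v w y
    have huv : ∀ a : A, a * ((u : A) * (v : A)) ∈ I := fun a => hI a _ (hI _ _ v.2)
    let ruv : A →L[ℂ] I :=
      ContinuousLinearMap.codRestrict
        ((ContinuousLinearMap.mul ℂ A).flip ((u : A) * (v : A))) I huv
    let G : A →L[ℂ] E :=
      D.comp ruv
        - (m.flip (D v)).comp (σ.comp ((ContinuousLinearMap.mul ℂ A).flip (u : A)))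
        - (m.flip (D u)).comp (σ.comp ((ContinuousLinearMap.mul ℂ A).flip (v : A)))
    have hG : ∀ a : A, G a = D ⟨a * ((u : A) * (v : A)), huv a⟩
        - m (σ (a * (u : A))) (D v) - m (σ (a * (v : A))) (D u) := by
      intro a
      simp only [G, ruv, ContinuousLinearMap.sub_apply, ContinuousLinearMap.comp_apply,
        ContinuousLinearMap.flip_apply, ContinuousLinearMap.mul_apply']
      congr 1
    have hGa1 : ∀ a : A, G a
        = m (σ (v : A)) (D ⟨a * (u : A), hI a (u : A) u.2⟩)
          - m (σ (a * (v : A))) (D u) := by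
      intro a
      rw [hG a, hDmul ⟨a * (u : A), hI a (u : A) u.2⟩ v (a * ((u : A) * (v : A))) (huv a)
        (mul_assoc a (u : A) (v : A)).symm]
      abel
    have hGa2 : ∀ a : A, G a
        = m (σ (u : A)) (D ⟨a * (v : A), hI a (v : A) v.2⟩)
          - m (σ (a * (u : A))) (D v) := by
      intro a
      rw [hG a, hDmul ⟨a * (v : A), hI a (v : A) v.2⟩ u (a * ((u : A) * (v : A))) (huv a)
        (by rw [mul_assoc a (v : A) (u : A), hcomm (v : A) (u : A)])]
      abel
    have hGmul : ∀ a b : A, G (a * b) = m (σ b) (G a) + m (σ a) (G b) := by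
      intro a b
      have t0 : D ⟨a * b * ((u : A) * (v : A)), huv (a * b)⟩
          = m (σ ((b : A) * (v : A))) (D ⟨a * (u : A), hI a (u : A) u.2⟩)
            + m (σ (a * (u : A))) (D ⟨b * (v : A), hI b (v : A) v.2⟩) := by
        refine hDmul ⟨a * (u : A), hI a (u : A) u.2⟩ ⟨b * (v : A), hI b (v : A) v.2⟩ _ _ ?_
        show a * b * ((u : A) * (v : A)) = a * (u : A) * (b * (v : A))
        rw [mul_assoc a (u : A) (b * (v : A)), ← mul_assoc (u : A) b (v : A),
          hcomm (u : A) b, mul_assoc b (u : A) (v : A), ← mul_assoc a b ((u : A) * (v : A))]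
      have t1 : m (σ (b * (v : A))) (D ⟨a * (u : A), hI a (u : A) u.2⟩)
          = m (σ b) (m (σ (v : A)) (D ⟨a * (u : A), hI a (u : A) u.2⟩)) := by
        rw [hσ, hm]
      have t2 : m (σ (a * (u : A))) (D ⟨b * (v : A), hI b (v : A) v.2⟩)
          = m (σ a) (m (σ (u : A)) (D ⟨b * (v : A), hI b (v : A) v.2⟩)) := by
        rw [hσ, hm]
      have t3 : m (σ (a * b * (u : A))) (D v)
          = m (σ a) (m (σ (b * (u : A))) (D v)) := by
        rw [mul_assoc a b (u : A), hσ, hm]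
      have t4 : m (σ (a * b * (v : A))) (D u)
          = m (σ b) (m (σ (a * (v : A))) (D u)) := by
        rw [show a * b * (v : A) = b * (a * (v : A)) by
          rw [← mul_assoc b a (v : A), hcomm a b], hσ, hm]
      rw [hG (a * b), t0, t3, t4, hGa1 a, hGa2 b, map_sub, map_sub, t1, t2]
      abel
    have hGzero : ∀ (a y : A), m y (G a) = 0 := by
      intro a y
      refine NormedSpace.eq_zero_of_forall_dual_eq_zero ℂ ?_
      intro lam
      set Φ : A →L[ℂ] A →L[ℂ] ℂ :=
        ((ContinuousLinearMap.compL ℂ A E ℂ) lam).comp (m.flip.comp G) with hΦdef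
      have hΦ : ∀ p q : A, Φ p q = lam (m q (G p)) := by
        intro p q
        simp [Φ, ContinuousLinearMap.compL_apply]
      obtain ⟨Λ, hΛ⟩ := hwa Φ (by
        intro p q z
        have e1 : m z (G (p * q)) = m (σ q * z) (G p) + m (z * σ p) (G q) := by
          rw [hGmul p q, map_add, ← hm, ← hm, hcomm z (σ q)]
        rw [hΦ, hΦ, hΦ, e1, map_add])
      have h := hΛ a y
      rw [hΦ a y, hcomm y (σ a), sub_self] at h
      exact h
    have hGw : G (w : A) = m (σ (v : A) * σ (u : A)) (D w) := by
      rw [hGa1 (w : A), hDmul w u ((w : A) * (u : A)) (hI (w : A) (u : A) u.2) rfl,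
        map_add, ← hm, ← hm, hσ, hcomm (σ (v : A)) (σ (w : A))]
      abel
    rw [hm, ← hGw]
    exact hGzero _ y
  -- conclusion on the span
  intro x hx
  have hx' : (x : A) ∈ Submodule.map I.subtype (LinearMap.ker (D : I →ₗ[ℂ] E)) := by
    refine Submodule.span_le.mpr ?_ hx
    rintro z ⟨a, ha, b, hb, c, hc, d, hd, rfl⟩
    have hab : a * b ∈ I := hI a b hb
    have hcd : c * d ∈ I := hI c d hd
    have hz : a * b * c * d ∈ I := hI _ d hd
    refine ⟨⟨a * b * c * d, hz⟩, ?_, rfl⟩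
    have h1 : D ⟨a * b * c * d, hz⟩
        = m (σ (c * d)) (D ⟨a * b, hab⟩) + m (σ (a * b)) (D ⟨c * d, hcd⟩) :=
      hDmul ⟨a * b, hab⟩ ⟨c * d, hcd⟩ _ hz (mul_assoc (a * b) c d)
    have h2 : D ⟨a * b, hab⟩ = m (σ b) (D ⟨a, ha⟩) + m (σ a) (D ⟨b, hb⟩) :=
      hDmul ⟨a, ha⟩ ⟨b, hb⟩ _ hab rfl
    have h3 : D ⟨c * d, hcd⟩ = m (σ d) (D ⟨c, hc⟩) + m (σ c) (D ⟨d, hd⟩) :=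
      hDmul ⟨c, hc⟩ ⟨d, hd⟩ _ hcd rfl
    have k1 : m (σ (c * d)) (m (σ b) (D ⟨a, ha⟩)) = 0 := by
      rw [hσ, ← hm, mul_assoc]
      exact key ⟨b, hb⟩ ⟨d, hd⟩ ⟨a, ha⟩ (σ c)
    have k2 : m (σ (c * d)) (m (σ a) (D ⟨b, hb⟩)) = 0 := by
      rw [hσ, ← hm, mul_assoc]
      exact key ⟨a, ha⟩ ⟨d, hd⟩ ⟨b, hb⟩ (σ c)
    have k3 : m (σ (a * b)) (m (σ d) (D ⟨c, hc⟩)) = 0 := by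
      rw [hσ, ← hm, mul_assoc]
      exact key ⟨d, hd⟩ ⟨b, hb⟩ ⟨c, hc⟩ (σ a)
    have k4 : m (σ (a * b)) (m (σ c) (D ⟨d, hd⟩)) = 0 := by
      rw [hσ, ← hm, mul_assoc]
      exact key ⟨c, hc⟩ ⟨b, hb⟩ ⟨d, hd⟩ (σ a)
    show D ⟨a * b * c * d, hz⟩ = 0
    rw [h1, h2, h3, map_add, map_add, k1, k2, k3, k4]
    simp
  obtain ⟨w, hw, hwx⟩ := hx'
  have hwx' : w = x := Subtype.ext hwx
  rw [← hwx']
  exact hw
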